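/- In the BP encoding of a binary tree with sentinel enclosing parentheses, node u is an ancestor of node v (with ancestors including the node itself) if and only if open(u) ≤ v < enclose_close(u), where nodes are identified with the indices of their closing parentheses. -/

import Mathlib

/-- A binary tree: `leaf` is the empty tree; each internal node has an
optional left and an optional right subtree (possibly `leaf`). -/
inductive BinTree : Type where
  | leaf : BinTree
  | node : BinTree → BinTree → BinTree
deriving DecidableEq

namespace BinTree

/-- Number of nodes of a binary tree. -/
def size : BinTree → ℕ
  | leaf => 0
  | node l r => l.size + r.size + 1

/-- BalancedBP-parenthesis encoding of binary trees:
`BP(empty) = ε`, `BP(t) = '(' ++ BP(t_l) ++ ')' ++ BP(t_r)`.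
`true` is an opening parenthesis, `false` a closing one. -/
def bp : BinTree → List Bool
  | leaf => []
  | node l r => true :: (l.bp ++ false :: r.bp)

/-- The subtree reached by following a path (`false` = left, `true` = right). -/
def subtreeAt : BinTree → List Bool → Option BinTree
  | t, [] => some t
  | leaf, _ :: _ => none
  | node l _, false :: p => subtreeAt l p
  | node _ r, true :: p => subtreeAt r p

/-- A path identifies an actual node of the tree (not an empty slot). -/
def ValidPath (t : BinTree) (p : List Bool) : Prop :=
  ∃ l r, subtreeAt t p = some (node l r)

/-- Index (0-based) of the opening parenthesis of the node at a path. -/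
def openIdx : BinTree → List Bool → Option ℕ
  | leaf, _ => none
  | node _ _, [] => some 0
  | node l _, false :: p => (openIdx l p).map (· + 1)
  | node l r, true :: p => (openIdx r p).map (· + (l.bp.length + 2))

/-- Index (0-based) of the closing parenthesis of the node at a path. -/
def closeIdx : BinTree → List Bool → Option ℕ
  | leaf, _ => none
  | node l _, [] => some (l.bp.length + 1)
  | node l _, false :: p => (closeIdx l p).map (· + 1)
  | node l r, true :: p => (closeIdx r p).map (· + (l.bp.length + 2))

/-- Inorder rank (0-based) of the node at a path. -/
def inorderIdx : BinTree → List Bool → Option ℕ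
  | leaf, _ => none
  | node l _, [] => some l.size
  | node l _, false :: p => inorderIdx l p
  | node l r, true :: p => (inorderIdx r p).map (· + (l.size + 1))

end BinTree

/-- A sequence of parentheses (`true` = '(') is balanced: equally many opening
and closing parentheses, and every prefix has at least as many opening ones. -/
def BalancedBP (s : List Bool) : Prop :=
  s.count true = s.count false ∧
  ∀ k, (s.take k).count false ≤ (s.take k).count true

/-- `excess s k`: number of opening minus closing parentheses among the first `k` symbols. -/
def excess (s : List Bool) (k : ℕ) : ℤ :=
  ((s.take k).count true : ℤ) - ((s.take k).count false : ℤ)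

/-- `IsMatch s i j`: positions `i < j` form a matching pair of parentheses
(the standard stack-based matching). -/
def IsMatch (s : List Bool) (i j : ℕ) : Prop :=
  i < j ∧ j < s.length ∧ s[i]? = some true ∧ s[j]? = some false ∧
  excess s (j + 1) = excess s i ∧
  ∀ k, i < k → k ≤ j → excess s i < excess s k

/-- `EnclosePair s i v j`: `j` is the closing parenthesis whose matching pair
tightly encloses the matching pair `(i, v)`. -/
def EnclosePair (s : List Bool) (i v j : ℕ) : Prop :=
  (∃ i', IsMatch s i' j ∧ i' < i ∧ v < j) ∧
  ∀ i'' j'', IsMatch s i'' j'' → i'' < i → v < j'' → j ≤ j''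

/-- Longest common prefix of two paths. -/
def lcp : List Bool → List Bool → List Bool
  | a :: as, b :: bs => if a = b then a :: lcp as bs else []
  | _, _ => []

lemma excess_zero (s : List Bool) : excess s 0 = 0 := by simp [excess]

lemma excess_succ_true (s : List Bool) (k : ℕ) :
    excess (true :: s) (k+1) = 1 + excess s k := by
  simp [excess, List.count_cons]; push_cast; ring

lemma excess_succ_false (s : List Bool) (k : ℕ) :
    excess (false :: s) (k+1) = -1 + excess s k := by
  simp [excess, List.count_cons]; push_cast; ring

lemma excess_append_left (A B : List Bool) (k : ℕ) (h : k ≤ A.length) :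
    excess (A ++ B) k = excess A k := by
  rw [excess, excess, List.take_append_of_le_length h]

lemma excess_append_right (A B : List Bool) (k : ℕ) :
    excess (A ++ B) (A.length + k) = excess A A.length + excess B k := by
  rw [excess, excess, excess, List.take_append]
  simp [List.count_append, List.take_of_length_le]
  push_cast; ring
lemma bp_count_true (t : BinTree) : t.bp.count true = t.size := by
  induction t with
  | leaf => simp [BinTree.bp, BinTree.size]
  | node l r ihl ihr =>
    simp [BinTree.bp, BinTree.size, List.count_append, List.count_cons, ihl, ihr]

lemma bp_count_false (t : BinTree) : t.bp.count false = t.size := by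
  induction t with
  | leaf => simp [BinTree.bp, BinTree.size]
  | node l r ihl ihr =>
    simp [BinTree.bp, BinTree.size, List.count_append, List.count_cons, ihl, ihr]
    omega

lemma excess_bp_len (t : BinTree) : excess t.bp t.bp.length = 0 := by
  simp [excess, bp_count_true, bp_count_false]

lemma bp_len_node (l r : BinTree) : (BinTree.node l r).bp.length = l.bp.length + r.bp.length + 2 := by
  simp [BinTree.bp]; omega

lemma excess_of_le (s : List Bool) (k : ℕ) (h : s.length ≤ k) : excess s k = excess s s.length := by
  rw [excess, excess, List.take_of_length_le h, List.take_length]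

lemma excess_bp_nonneg (t : BinTree) (k : ℕ) : 0 ≤ excess t.bp k := by
  induction t generalizing k with
  | leaf => simp [BinTree.bp, excess]
  | node l r ihl ihr =>
    cases k with
    | zero => simp [excess]
    | succ m =>
      rw [show (BinTree.node l r).bp = true :: (l.bp ++ false :: r.bp) from rfl, excess_succ_true]
      rcases le_or_gt m l.bp.length with h | h
      · rw [excess_append_left _ _ _ h]; have := ihl m; omega
      · obtain ⟨k', rfl⟩ : ∃ k', m = l.bp.length + (k' + 1) := ⟨m - l.bp.length - 1, by omega⟩
        rw [excess_append_right, excess_succ_false, excess_bp_len]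
        have := ihr k'; omega

lemma excess_bp_node_pos (l r : BinTree) (k : ℕ) (h1 : 1 ≤ k) (h2 : k ≤ l.bp.length + 1) :
    1 ≤ excess (BinTree.node l r).bp k := by
  obtain ⟨m, rfl⟩ : ∃ m, k = m + 1 := ⟨k - 1, by omega⟩
  rw [show (BinTree.node l r).bp = true :: (l.bp ++ false :: r.bp) from rfl, excess_succ_true,
    excess_append_left _ _ _ (by omega)]
  have := excess_bp_nonneg l m; omega

lemma excess_node_left (l r : BinTree) (k : ℕ) (h : k ≤ l.bp.length) :
    excess (BinTree.node l r).bp (k+1) = 1 + excess l.bp k := by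
  rw [show (BinTree.node l r).bp = true :: (l.bp ++ false :: r.bp) from rfl, excess_succ_true,
    excess_append_left _ _ _ h]

lemma excess_node_right (l r : BinTree) (k : ℕ) :
    excess (BinTree.node l r).bp (l.bp.length + 2 + k) = excess r.bp k := by
  rw [show (BinTree.node l r).bp = true :: (l.bp ++ false :: r.bp) from rfl,
    show l.bp.length + 2 + k = (l.bp.length + (k + 1)) + 1 by omega, excess_succ_true,
    excess_append_right, excess_bp_len, excess_succ_false]
  ring
lemma isMatch_root (l r : BinTree) : IsMatch (BinTree.node l r).bp 0 (l.bp.length + 1) := by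
  refine ⟨by omega, by rw [bp_len_node]; omega, by simp [BinTree.bp], ?_, ?_, ?_⟩
  · show ((true :: (l.bp ++ false :: r.bp)))[l.bp.length + 1]? = some false
    rw [List.getElem?_cons_succ, List.getElem?_append_right (le_refl _)]
    simp
  · rw [excess_zero, show l.bp.length + 1 + 1 = l.bp.length + 2 + 0 by omega,
      excess_node_right, excess_zero]
  · intro k hk1 hk2
    rw [excess_zero]
    have := excess_bp_node_pos l r k hk1 hk2
    omega

lemma isMatch_shift_left {l : BinTree} (r : BinTree) {i j : ℕ} (h : IsMatch l.bp i j) :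
    IsMatch (BinTree.node l r).bp (i+1) (j+1) := by
  obtain ⟨h1, h2, h3, h4, h5, h6⟩ := h
  have hget : ∀ m, m < l.bp.length → ((BinTree.node l r).bp)[m+1]? = l.bp[m]? := by
    intro m hm
    show ((true :: (l.bp ++ false :: r.bp)))[m+1]? = _
    rw [List.getElem?_cons_succ, List.getElem?_append_left hm]
  refine ⟨by omega, by rw [bp_len_node]; omega, ?_, ?_, ?_, ?_⟩
  · rw [hget i (by omega)]; exact h3
  · rw [hget j h2]; exact h4
  · rw [excess_node_left l r (j+1) h2, excess_node_left l r i (by omega), h5]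
  · intro k hk1 hk2
    obtain ⟨m, rfl⟩ : ∃ m, k = m + 1 := ⟨k - 1, by omega⟩
    rw [excess_node_left l r i (by omega), excess_node_left l r m (by omega)]
    have := h6 m (by omega) (by omega)
    omega

lemma isMatch_shift_right {r : BinTree} (l : BinTree) {i j : ℕ} (h : IsMatch r.bp i j) :
    IsMatch (BinTree.node l r).bp (l.bp.length + 2 + i) (l.bp.length + 2 + j) := by
  obtain ⟨h1, h2, h3, h4, h5, h6⟩ := h
  have hget : ∀ m, ((BinTree.node l r).bp)[l.bp.length + 2 + m]? = r.bp[m]? := by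
    intro m
    show ((true :: (l.bp ++ false :: r.bp)))[l.bp.length + 2 + m]? = _
    rw [show l.bp.length + 2 + m = (l.bp.length + (m+1)) + 1 by omega,
      List.getElem?_cons_succ, List.getElem?_append_right (by omega)]
    simp
  refine ⟨by omega, by rw [bp_len_node]; omega, ?_, ?_, ?_, ?_⟩
  · rw [hget i]; exact h3
  · rw [hget j]; exact h4
  · rw [show l.bp.length + 2 + j + 1 = l.bp.length + 2 + (j + 1) by omega,
      excess_node_right, excess_node_right, h5]
  · intro k hk1 hk2
    obtain ⟨m, rfl⟩ : ∃ m, k = l.bp.length + 2 + m := ⟨k - l.bp.length - 2, by omega⟩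
    rw [excess_node_right, excess_node_right]
    exact h6 m (by omega) (by omega)
open BinTree

lemma openIdx_valid {t : BinTree} {p : List Bool} {o : ℕ} (h : openIdx t p = some o) :
    ∃ l r, subtreeAt t p = some (node l r) := by
  induction p generalizing t o with
  | nil =>
    cases t with
    | leaf => simp [openIdx] at h
    | node l r => exact ⟨l, r, rfl⟩
  | cons b p ih =>
    cases t with
    | leaf => simp [openIdx] at h
    | node l r =>
      cases b with
      | false =>
        simp only [openIdx, Option.map_eq_some_iff] at h
        obtain ⟨o', ho', -⟩ := h
        exact ih ho'
      | true =>
        simp only [openIdx, Option.map_eq_some_iff] at h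
        obtain ⟨o', ho', -⟩ := h
        exact ih ho'

lemma closeIdx_eq {t l r : BinTree} {p : List Bool} {o : ℕ}
    (h1 : subtreeAt t p = some (node l r)) (h2 : openIdx t p = some o) :
    closeIdx t p = some (o + l.bp.length + 1) := by
  induction p generalizing t o with
  | nil =>
    cases t with
    | leaf => simp [openIdx] at h2
    | node tl tr =>
      simp only [subtreeAt, Option.some.injEq] at h1
      simp only [openIdx, Option.some.injEq] at h2
      injection h1 with e1 e2; subst e1; subst e2; cases h2
      simp [closeIdx]
  | cons b p ih =>
    cases t with
    | leaf => simp [openIdx] at h2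
    | node tl tr =>
      cases b with
      | false =>
        simp only [subtreeAt] at h1
        simp only [openIdx, Option.map_eq_some_iff] at h2
        obtain ⟨o', ho', rfl⟩ := h2
        simp only [closeIdx, ih h1 ho', Option.map_some, Option.some.injEq]
        omega
      | true =>
        simp only [subtreeAt] at h1
        simp only [openIdx, Option.map_eq_some_iff] at h2
        obtain ⟨o', ho', rfl⟩ := h2
        simp only [closeIdx, ih h1 ho', Option.map_some, Option.some.injEq]
        omega

lemma closeIdx_lt {t : BinTree} {p : List Bool} {c : ℕ} (h : closeIdx t p = some c) :
    c < t.bp.length := by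
  induction p generalizing t c with
  | nil =>
    cases t with
    | leaf => simp [closeIdx] at h
    | node tl tr =>
      simp only [closeIdx, Option.some.injEq] at h
      rw [bp_len_node]; omega
  | cons b p ih =>
    cases t with
    | leaf => simp [closeIdx] at h
    | node tl tr =>
      cases b with
      | false =>
        simp only [closeIdx, Option.map_eq_some_iff] at h
        obtain ⟨c', hc', rfl⟩ := h
        have := ih hc'; rw [bp_len_node]; omega
      | true =>
        simp only [closeIdx, Option.map_eq_some_iff] at h
        obtain ⟨c', hc', rfl⟩ := h
        have := ih hc'; rw [bp_len_node]; omega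

lemma bp_decomp {t u : BinTree} {p : List Bool} {o : ℕ}
    (h1 : subtreeAt t p = some u) (h2 : openIdx t p = some o) :
    ∃ A B : List Bool, t.bp = A ++ u.bp ++ B ∧ A.length = o := by
  induction p generalizing t o with
  | nil =>
    cases t with
    | leaf => simp [openIdx] at h2
    | node tl tr =>
      simp only [subtreeAt, Option.some.injEq] at h1
      simp only [openIdx, Option.some.injEq] at h2
      subst h1; cases h2
      exact ⟨[], [], by simp, rfl⟩
  | cons b p ih =>
    cases t with
    | leaf => simp [openIdx] at h2
    | node tl tr =>
      cases b with
      | false =>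
        simp only [subtreeAt] at h1
        simp only [openIdx, Option.map_eq_some_iff] at h2
        obtain ⟨o', ho', rfl⟩ := h2
        obtain ⟨A, B, hAB, hA⟩ := ih h1 ho'
        refine ⟨true :: A, B ++ false :: tr.bp, ?_, by simp [hA]⟩
        show true :: (tl.bp ++ false :: tr.bp) = _
        rw [hAB]; simp
      | true =>
        simp only [subtreeAt] at h1
        simp only [openIdx, Option.map_eq_some_iff] at h2
        obtain ⟨o', ho', rfl⟩ := h2
        obtain ⟨A, B, hAB, hA⟩ := ih h1 ho'
        refine ⟨true :: tl.bp ++ false :: A, B, ?_, by simp [hA]; omega⟩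
        show true :: (tl.bp ++ false :: tr.bp) = _
        rw [hAB]; simp

lemma closeIdx_append {t u : BinTree} {p : List Bool} {o : ℕ} (q : List Bool)
    (h1 : subtreeAt t p = some u) (h2 : openIdx t p = some o) :
    closeIdx t (p ++ q) = (closeIdx u q).map (· + o) := by
  induction p generalizing t o with
  | nil =>
    cases t with
    | leaf => simp [openIdx] at h2
    | node tl tr =>
      simp only [subtreeAt, Option.some.injEq] at h1
      simp only [openIdx, Option.some.injEq] at h2
      subst h1; cases h2
      simp
  | cons b p ih =>
    cases t with
    | leaf => simp [openIdx] at h2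
    | node tl tr =>
      cases b with
      | false =>
        simp only [subtreeAt] at h1
        simp only [openIdx, Option.map_eq_some_iff] at h2
        obtain ⟨o', ho', rfl⟩ := h2
        show closeIdx (node tl tr) (false :: (p ++ q)) = _
        simp only [closeIdx, ih h1 ho']
        cases closeIdx u q with
        | none => simp
        | some c => simp; omega
      | true =>
        simp only [subtreeAt] at h1
        simp only [openIdx, Option.map_eq_some_iff] at h2
        obtain ⟨o', ho', rfl⟩ := h2
        show closeIdx (node tl tr) (true :: (p ++ q)) = _
        simp only [closeIdx, ih h1 ho']
        cases closeIdx u q with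
        | none => simp
        | some c => simp; omega

lemma spine_end {k : ℕ} : ∀ {t l r : BinTree} {o : ℕ},
    subtreeAt t (List.replicate k true) = some (node l r) →
    openIdx t (List.replicate k true) = some o →
    o + (node l r).bp.length = t.bp.length := by
  induction k with
  | zero =>
    intro t l r o h1 h2
    simp only [List.replicate, subtreeAt, Option.some.injEq] at h1
    cases t with
    | leaf => simp [openIdx] at h2
    | node tl tr =>
      simp only [List.replicate, openIdx, Option.some.injEq] at h2
      injection h1 with e1 e2; subst e1; subst e2; cases h2; omega
  | succ k ih =>
    intro t l r o h1 h2
    cases t with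
    | leaf => simp [openIdx] at h2
    | node tl tr =>
      simp only [List.replicate, subtreeAt] at h1
      simp only [List.replicate, openIdx, Option.map_eq_some_iff] at h2
      obtain ⟨o', ho', rfl⟩ := h2
      have := ih h1 ho'
      rw [bp_len_node tl tr]; omega
lemma open_add_sub_le {t u : BinTree} {p : List Bool} {o : ℕ}
    (h1 : subtreeAt t p = some u) (h2 : openIdx t p = some o) :
    o + u.bp.length ≤ t.bp.length := by
  obtain ⟨A, B, hAB, hA⟩ := bp_decomp h1 h2
  rw [hAB, List.length_append, List.length_append, hA]
  omega

lemma excess_decomp (A C B : List Bool) (m : ℕ) (hm : m ≤ C.length) :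
    excess (A ++ C ++ B) (A.length + m) = excess A A.length + excess C m := by
  rw [List.append_assoc, excess_append_right, excess_append_left _ _ _ hm]

lemma min_close {t l r : BinTree} {pu : List Bool} {o : ℕ}
    (h1 : subtreeAt t pu = some (node l r)) (h2 : openIdx t pu = some o)
    {i'' j'' : ℕ} (hm : IsMatch t.bp i'' j'') (hi : i'' < o)
    (hcu : o + l.bp.length + 1 < j'') :
    o + (node l r).bp.length ≤ j'' := by
  by_contra hcon
  push_neg at hcon
  obtain ⟨A, B, hAB, hA⟩ := bp_decomp h1 h2
  obtain ⟨hm1, hm2, hm3, hm4, hm5, hm6⟩ := hm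
  set sub := (BinTree.node l r).bp with hsub
  have hexc : ∀ m, m ≤ sub.length → excess t.bp (o + m) = excess A A.length + excess sub m := by
    intro m hmle
    rw [hAB, ← hA, excess_decomp _ _ _ _ hmle]
  have ho : excess t.bp o = excess A A.length := by
    have := hexc 0 (by omega)
    rw [excess_zero] at this; simpa using this
  have h6 := hm6 o hi (by omega)
  rw [ho] at h6
  have hj1 : j'' + 1 = o + (j'' + 1 - o) := by omega
  have hle : j'' + 1 - o ≤ sub.length := by omega
  have := hexc (j'' + 1 - o) hle
  rw [← hj1] at this
  rw [hm5] at this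
  have hnn := excess_bp_nonneg (BinTree.node l r) (j'' + 1 - o)
  rw [← hsub] at hnn
  omega

lemma exists_enclosing : ∀ (p : List Bool) (t l r : BinTree) (o : ℕ), false ∈ p →
    subtreeAt t p = some (node l r) → openIdx t p = some o →
    ∃ i', i' < o ∧ IsMatch t.bp i' (o + (node l r).bp.length) := by
  intro p
  induction p with
  | nil => intro t l r o hf; simp at hf
  | cons b p ih =>
    intro t l r o hf h1 h2
    cases t with
    | leaf => simp [openIdx] at h2
    | node tl tr =>
      cases b with
      | false =>
        simp only [subtreeAt] at h1
        simp only [openIdx, Option.map_eq_some_iff] at h2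
        obtain ⟨o', ho', rfl⟩ := h2
        by_cases hp : false ∈ p
        · obtain ⟨i', hi', hM⟩ := ih tl l r o' hp h1 ho'
          refine ⟨i' + 1, by omega, ?_⟩
          have := isMatch_shift_left tr hM
          rwa [show o' + (BinTree.node l r).bp.length + 1 = o' + 1 + (BinTree.node l r).bp.length by omega] at this
        · have hrep : p = List.replicate p.length true :=
            List.eq_replicate_length.mpr (fun b hb => by cases b with | false => exact absurd hb hp | true => rfl)
          rw [hrep] at h1 ho'
          have hend := spine_end h1 ho'
          refine ⟨0, by omega, ?_⟩
          have := isMatch_root tl tr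
          rwa [show tl.bp.length + 1 = o' + 1 + (BinTree.node l r).bp.length by omega] at this
      | true =>
        simp only [subtreeAt] at h1
        simp only [openIdx, Option.map_eq_some_iff] at h2
        obtain ⟨o', ho', rfl⟩ := h2
        have hp : false ∈ p := by simpa using hf
        obtain ⟨i', hi', hM⟩ := ih tr l r o' hp h1 ho'
        refine ⟨tl.bp.length + 2 + i', by omega, ?_⟩
        have := isMatch_shift_right tl hM
        rwa [show tl.bp.length + 2 + (o' + (BinTree.node l r).bp.length)
          = o' + (tl.bp.length + 2) + (BinTree.node l r).bp.length by omega] at this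

lemma not_prefix_outside : ∀ (pu pv : List Bool) (t l r : BinTree) (o cv : ℕ),
    ¬ pu <+: pv → subtreeAt t pu = some (node l r) → openIdx t pu = some o →
    closeIdx t pv = some cv →
    cv < o ∨ o + (BinTree.node l r).bp.length ≤ cv := by
  intro pu
  induction pu with
  | nil => intro pv t l r o cv hnp; exact absurd (List.nil_prefix) hnp
  | cons b pu ih =>
    intro pv t l r o cv hnp h1 h2 h3
    cases t with
    | leaf => simp [openIdx] at h2
    | node tl tr =>
      cases pv with
      | nil =>
        simp only [closeIdx, Option.some.injEq] at h3
        subst h3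
        cases b with
        | false =>
          simp only [subtreeAt] at h1
          simp only [openIdx, Option.map_eq_some_iff] at h2
          obtain ⟨o', ho', rfl⟩ := h2
          right
          have := open_add_sub_le h1 ho'
          omega
        | true =>
          simp only [openIdx, Option.map_eq_some_iff] at h2
          obtain ⟨o', ho', rfl⟩ := h2
          left; omega
      | cons b' pv =>
        cases b with
        | false =>
          simp only [subtreeAt] at h1
          simp only [openIdx, Option.map_eq_some_iff] at h2
          obtain ⟨o', ho', rfl⟩ := h2
          cases b' with
          | false =>
            simp only [closeIdx, Option.map_eq_some_iff] at h3
            obtain ⟨c', hc', rfl⟩ := h3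
            have hnp' : ¬ pu <+: pv := fun h => hnp (List.cons_prefix_cons.mpr ⟨rfl, h⟩)
            rcases ih pv tl l r o' c' hnp' h1 ho' hc' with h | h
            · left; omega
            · right; omega
          | true =>
            simp only [closeIdx, Option.map_eq_some_iff] at h3
            obtain ⟨c', hc', rfl⟩ := h3
            right
            have := open_add_sub_le h1 ho'
            omega
        | true =>
          simp only [subtreeAt] at h1
          simp only [openIdx, Option.map_eq_some_iff] at h2
          obtain ⟨o', ho', rfl⟩ := h2
          cases b' with
          | false =>
            simp only [closeIdx, Option.map_eq_some_iff] at h3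
            obtain ⟨c', hc', rfl⟩ := h3
            left
            have := closeIdx_lt hc'
            omega
          | true =>
            simp only [closeIdx, Option.map_eq_some_iff] at h3
            obtain ⟨c', hc', rfl⟩ := h3
            have hnp' : ¬ pu <+: pv := fun h => hnp (List.cons_prefix_cons.mpr ⟨rfl, h⟩)
            rcases ih pv tr l r o' c' hnp' h1 ho' hc' with h | h
            · left; omega
            · right; omega
/-- with sentinel enclosing parentheses, `u` is an ancestor of
`v` (ancestors include the node itself) iff `open u ≤ v < encloseClose u`,
nodes being identified with their closing-parenthesis indices. -/
theorem isAncestor_iff (t : BinTree) (pu pv : List Bool) (ou cu cv j : ℕ)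
    (hou : BinTree.openIdx (.node t .leaf) pu = some ou)
    (hcu : BinTree.closeIdx (.node t .leaf) pu = some cu)
    (hcv : BinTree.closeIdx (.node t .leaf) pv = some cv)
    (hj : EnclosePair (BinTree.node t .leaf).bp ou cu j) :
    pu <+: pv ↔ (ou ≤ cv ∧ cv < j) := by
  obtain ⟨⟨i0, hm0, hi0, hvj⟩, hmin⟩ := hj
  cases pu with
  | nil =>
    simp only [openIdx, Option.some.injEq] at hou
    omega
  | cons b pu' =>
    cases b with
    | true => simp [openIdx] at hou
    | false =>
      obtain ⟨l, r, hsub⟩ := openIdx_valid hou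
      have hcu' := closeIdx_eq hsub hou
      rw [hcu] at hcu'
      injection hcu' with hcueq
      have hlen : (BinTree.node l r).bp.length = l.bp.length + r.bp.length + 2 :=
        bp_len_node l r
      have hfmem : false ∈ (false :: pu') := List.mem_cons_self
      obtain ⟨i', hi', hM⟩ := exists_enclosing _ _ _ _ _ hfmem hsub hou
      have hle2 : j ≤ ou + (BinTree.node l r).bp.length := hmin i' _ hM hi' (by omega)
      have hle1 : ou + (BinTree.node l r).bp.length ≤ j :=
        min_close hsub hou hm0 hi0 (by omega)
      constructor
      · rintro ⟨q, rfl⟩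
        have hca := closeIdx_append q hsub hou
        rw [hcv] at hca
        obtain ⟨c', hc', hcv'⟩ := Option.map_eq_some_iff.mp hca.symm
        have := closeIdx_lt hc'
        constructor <;> omega
      · rintro ⟨h1, h2⟩
        by_contra hnp
        rcases not_prefix_outside _ _ _ _ _ _ _ hnp hsub hou hcv with h | h <;> omega
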